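/- Let π ∈ NC(n) and 1 ≤ p ≤ q ≤ n. Then the set [2p−1, 2q] ∩ ℤ is a union of blocks of the arch-diagram A(π) ∈ NCP(2n) if and only if the set [p,q] ∩ ℤ is a union of blocks of π. -/
import Mathlib


open scoped Classical

/-- A setoid (partition) of `Fin n` is non-crossing if there is no crossing
`a < b < c < d` with `a ∼ c`, `b ∼ d` but `a` and `b` in distinct blocks. -/
def IsNC {n : ℕ} (S : Setoid (Fin n)) : Prop :=
  ∀ a b c d : Fin n, a < b → b < c → c < d → S.r a c → S.r b d → S.r a b

/-- A partition is a pairing if every block has exactly two elements. -/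
def IsPairing {m : ℕ} (T : Setoid (Fin m)) : Prop :=
  ∀ x : Fin m, ∃ y : Fin m, y ≠ x ∧ T.r x y ∧ ∀ z : Fin m, T.r x z → z = x ∨ z = y

/-- The block of `i` in the partition `S`, as a finset. -/
noncomputable def blockOf {n : ℕ} (S : Setoid (Fin n)) (i : Fin n) : Finset (Fin n) :=
  Finset.univ.filter (fun j => S.r i j)

lemma blockOf_nonempty {n : ℕ} (S : Setoid (Fin n)) (i : Fin n) :
    (blockOf S i).Nonempty :=
  ⟨i, by simp [blockOf, S.iseqv.refl i]⟩

/-- The permutation `P_S` which performs an increasing cycle on every block of `S`: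
it sends `i` to the next larger element of its block, or to the minimum of the
block if `i` is the largest element of its block. -/
noncomputable def nextP {n : ℕ} (S : Setoid (Fin n)) (i : Fin n) : Fin n :=
  if h : ((blockOf S i).filter (fun j => i < j)).Nonempty
  then ((blockOf S i).filter (fun j => i < j)).min' h
  else (blockOf S i).min' (blockOf_nonempty S i)

/-- The inverse permutation `P_S⁻¹` (decreasing cycle on every block of `S`). -/
noncomputable def prevP {n : ℕ} (S : Setoid (Fin n)) (i : Fin n) : Fin n :=
  if h : ((blockOf S i).filter (fun j => j < i)).Nonempty
  then ((blockOf S i).filter (fun j => j < i)).max' h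
  else (blockOf S i).max' (blockOf_nonempty S i)

/-- `0`-indexed version of the point `2i-1` of `{1,…,2n}`. -/
def dEven {n : ℕ} (j : Fin n) : Fin (2*n) := ⟨2*j.val, by have := j.isLt; omega⟩

/-- `0`-indexed version of the point `2i` of `{1,…,2n}`. -/
def dOdd {n : ℕ} (j : Fin n) : Fin (2*n) := ⟨2*j.val+1, by have := j.isLt; omega⟩

/-- The doubling construction `π ↦ A(π)`: the pairing of `{1,…,2n}` generated by
pairing each point `2i` with `2P_π(i) - 1`, so that the associated permutation
satisfies `P_{A(π)}(2i) = 2P_π(i) - 1` and `P_{A(π)}(2i-1) = 2P_π⁻¹(i)`. -/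
noncomputable def archSetoid {n : ℕ} (S : Setoid (Fin n)) : Setoid (Fin (2*n)) :=
  Relation.EqvGen.setoid (fun a b => ∃ j : Fin n, a = dOdd j ∧ b = dEven (nextP S j))

/-- The meandric system permutation `M_{π,ρ} ∈ S_{2n}`, defined by
`M_{π,ρ}(2i-1) = 2P_π⁻¹(i)` and `M_{π,ρ}(2i) = 2P_ρ(i) - 1` (here `0`-indexed). -/
noncomputable def meanderMap {n : ℕ} (π ρ : Setoid (Fin n)) (x : Fin (2*n)) : Fin (2*n) :=
  if x.val % 2 = 0
  then dOdd (prevP π ⟨x.val / 2, by have := x.isLt; omega⟩)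
  else dEven (nextP ρ ⟨x.val / 2, by have := x.isLt; omega⟩)

/-- The orbit partition of a map. -/
def orbitSetoid {m : ℕ} (f : Fin m → Fin m) : Setoid (Fin m) :=
  Relation.EqvGen.setoid (fun a b => f a = b)

/-- Number of orbits of a map. -/
noncomputable def numOrbits {m : ℕ} (f : Fin m → Fin m) : ℕ :=
  Nat.card (Quotient (orbitSetoid f))

/-- `S` is a union of blocks of the partition `T`. -/
def IsBlockUnion {m : ℕ} (T : Setoid (Fin m)) (S : Set (Fin m)) : Prop :=
  ∀ x ∈ S, ∀ y, T.r x y → y ∈ S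

/-- `S` is invariant under `f`. -/
def MInvariant {m : ℕ} (f : Fin m → Fin m) (S : Set (Fin m)) : Prop :=
  ∀ x ∈ S, f x ∈ S

/-- The meandric system `M_{π,ρ}` is reducible: some proper subinterval
`{a,…,b}` of `{1,…,2n}` is invariant under `M_{π,ρ}`. -/
noncomputable def Reducible {n : ℕ} (π ρ : Setoid (Fin n)) : Prop :=
  ∃ a b : Fin (2*n), a ≤ b ∧ b.val - a.val < 2*n - 1 ∧
    MInvariant (meanderMap π ρ) {x | a ≤ x ∧ x ≤ b}

/-- The join in the lattice of non-crossing partitions: the smallest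
non-crossing partition above both `π` and `ρ`. -/
noncomputable def ncJoin {m : ℕ} (π ρ : Setoid (Fin m)) : Setoid (Fin m) :=
  sInf {τ | IsNC τ ∧ π ≤ τ ∧ ρ ≤ τ}

/-- The moment-cumulant formula of free probability: `mom n` is the sum over all
non-crossing partitions of `{1,…,n}` of the products of cumulants `κ` indexed
by the block sizes.  This uniquely determines the free cumulants `κ n`, `n ≥ 1`,
of a sequence of moments. -/
def MomCum {F : Type*} [Field F] (mom κ : ℕ → F) : Prop :=
  ∀ n : ℕ, 0 < n →
    mom n = ∑ᶠ S ∈ {S : Setoid (Fin n) | IsNC S}, ∏ᶠ B ∈ Setoid.classes S, κ B.ncard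

/-- The number of irreducible meandric systems on `2k` bridges, described as the
number of pairs `(π,ρ) ∈ NC(k)²` with `π ∨ ρ = 1_k`, `π ∧ ρ = 0_k`. -/
noncomputable def mirr (k : ℕ) : ℕ :=
  Nat.card {pr : Setoid (Fin k) × Setoid (Fin k) //
    IsNC pr.1 ∧ IsNC pr.2 ∧ ncJoin pr.1 pr.2 = ⊤ ∧ pr.1 ⊓ pr.2 = ⊥}

/-- The number of pairs `(π,ρ) ∈ NC(n)²` whose meandric system `M_{π,ρ}` has
exactly `k` orbits (connected components). -/
noncomputable def mcount (n k : ℕ) : ℕ :=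
  Nat.card {pr : Setoid (Fin n) × Setoid (Fin n) //
    IsNC pr.1 ∧ IsNC pr.2 ∧ numOrbits (meanderMap pr.1 pr.2) = k}

/-- The number of meanders on `2n` bridges. -/
noncomputable def meanderNum (n : ℕ) : ℕ := mcount n 1
lemma mem_blockOf_iff {n : ℕ} (S : Setoid (Fin n)) (i j : Fin n) :
    j ∈ blockOf S i ↔ S.r i j := by simp [blockOf]

lemma nextP_mem {n : ℕ} (S : Setoid (Fin n)) (i : Fin n) :
    nextP S i ∈ blockOf S i := by
  unfold nextP
  split
  · next h => exact Finset.mem_of_mem_filter _ (Finset.min'_mem _ h)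
  · exact Finset.min'_mem _ _

lemma nextP_rel {n : ℕ} (S : Setoid (Fin n)) (i : Fin n) : S.r i (nextP S i) :=
  (mem_blockOf_iff S i _).1 (nextP_mem S i)

lemma blockOf_eq {n : ℕ} (S : Setoid (Fin n)) {x y : Fin n} (h : S.r x y) :
    blockOf S x = blockOf S y := by
  ext z
  simp only [mem_blockOf_iff]
  exact ⟨fun hz => S.iseqv.trans (S.iseqv.symm h) hz, fun hz => S.iseqv.trans h hz⟩

lemma climbP {n : ℕ} (S : Setoid (Fin n)) (A : Set (Fin n))
    (hA : ∀ x ∈ A, nextP S x ∈ A) :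
    ∀ k (x y : Fin n), y.val - x.val ≤ k → S.r x y → x ≤ y → x ∈ A → y ∈ A := by
  intro k
  induction k with
  | zero =>
    intro x y hk hr hxy hxA
    have hx : x = y := Fin.le_antisymm hxy (by omega)
    exact hx ▸ hxA
  | succ k ih =>
    intro x y hk hr hxy hxA
    rcases eq_or_lt_of_le hxy with rfl | hlt
    · exact hxA
    · have hy : y ∈ (blockOf S x).filter (fun j => x < j) := by
        simp only [Finset.mem_filter, mem_blockOf_iff]
        exact ⟨hr, hlt⟩
      have hne : ((blockOf S x).filter (fun j => x < j)).Nonempty := ⟨y, hy⟩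
      have hz : nextP S x = ((blockOf S x).filter (fun j => x < j)).min' hne := by
        unfold nextP; rw [dif_pos hne]
      have hzy : nextP S x ≤ y := by rw [hz]; exact Finset.min'_le _ _ hy
      have hxz : x < nextP S x := by
        have := Finset.min'_mem _ hne
        rw [← hz] at this
        exact (Finset.mem_filter.1 this).2
      have hrz : S.r x (nextP S x) := nextP_rel S x
      exact ih (nextP S x) y (by omega)
        (S.iseqv.trans (S.iseqv.symm hrz) hr) hzy (hA x hxA)

lemma orbit_closed {n : ℕ} (S : Setoid (Fin n)) (A : Set (Fin n))
    (hA : ∀ x ∈ A, nextP S x ∈ A) {x y : Fin n} (hr : S.r x y) (hx : x ∈ A) :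
    y ∈ A := by
  by_cases hxy : x ≤ y
  · exact climbP S A hA _ x y le_rfl hr hxy hx
  · set M := (blockOf S x).max' (blockOf_nonempty S x) with hM
    have hMmem : M ∈ blockOf S x := Finset.max'_mem _ _
    have hrM : S.r x M := (mem_blockOf_iff S x M).1 hMmem
    have hxM : x ≤ M := Finset.le_max' _ x ((mem_blockOf_iff S x x).2 (S.iseqv.refl x))
    have hMA : M ∈ A := climbP S A hA _ x M le_rfl hrM hxM hx
    have hblk : blockOf S M = blockOf S x := (blockOf_eq S hrM).symm
    have hfilt : ¬ ((blockOf S M).filter (fun j => M < j)).Nonempty := by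
      rw [hblk]
      rintro ⟨z, hz⟩
      rw [Finset.mem_filter] at hz
      exact absurd (Finset.le_max' _ z hz.1) (not_le.2 hz.2)
    have hnM : nextP S M = (blockOf S M).min' (blockOf_nonempty S M) := by
      unfold nextP; rw [dif_neg hfilt]
    have hmA : nextP S M ∈ A := hA M hMA
    have hrm : S.r (nextP S M) y := by
      have h1 : S.r M (nextP S M) := nextP_rel S M
      exact S.iseqv.trans (S.iseqv.symm h1) (S.iseqv.trans (S.iseqv.symm hrM) hr)
    have hymem : y ∈ blockOf S M := by
      rw [hblk]; exact (mem_blockOf_iff S x y).2 hr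
    have hmy : nextP S M ≤ y := by rw [hnM]; exact Finset.min'_le _ y hymem
    exact climbP S A hA _ (nextP S M) y le_rfl hrm hmy hmA

/-- For `π ∈ NC(n)` and `1 ≤ p ≤ q ≤ n` (here `0`-indexed): the interval
`[2p-1, 2q] ∩ ℤ` is a union of blocks of `A(π)` iff `[p,q] ∩ ℤ` is a union of
blocks of `π`. -/
theorem interval_blockUnion_arch_iff (n : ℕ) (S : Setoid (Fin n)) (hS : IsNC S)
    (p q : Fin n) (hpq : p ≤ q) :
    IsBlockUnion (archSetoid S)
        {x : Fin (2*n) | 2*p.val ≤ x.val ∧ x.val ≤ 2*q.val + 1}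
      ↔ IsBlockUnion S {x : Fin n | p.val ≤ x.val ∧ x.val ≤ q.val} := by
  constructor
  · intro hBU x hx y hxy
    refine orbit_closed S {x : Fin n | p.val ≤ x.val ∧ x.val ≤ q.val} ?_ hxy hx
    intro j hj
    have h1 : (dOdd j : Fin (2*n)) ∈
        {x : Fin (2*n) | 2*p.val ≤ x.val ∧ x.val ≤ 2*q.val + 1} := by
      simp only [Set.mem_setOf_eq, dOdd]
      obtain ⟨h1, h2⟩ := hj
      omega
    have h2 := hBU _ h1 (dEven (nextP S j))
      (Relation.EqvGen.rel _ _ ⟨j, rfl, rfl⟩)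
    simp only [Set.mem_setOf_eq, dEven] at h2
    constructor <;> omega
  · intro hI
    have key : ∀ a b : Fin (2*n),
        Relation.EqvGen (fun a b => ∃ j : Fin n, a = dOdd j ∧ b = dEven (nextP S j)) a b →
        ((2*p.val ≤ a.val ∧ a.val ≤ 2*q.val + 1) ↔
          (2*p.val ≤ b.val ∧ b.val ≤ 2*q.val + 1)) := by
      intro a b h
      induction h with
      | rel a b h =>
        obtain ⟨j, rfl, rfl⟩ := h
        have hiff : (p.val ≤ j.val ∧ j.val ≤ q.val) ↔
            (p.val ≤ (nextP S j).val ∧ (nextP S j).val ≤ q.val) := by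
          constructor
          · intro hj
            exact hI j hj (nextP S j) (nextP_rel S j)
          · intro hj
            exact hI (nextP S j) hj j (S.iseqv.symm (nextP_rel S j))
        simp only [dOdd, dEven]
        omega
      | refl => exact Iff.rfl
      | symm _ _ _ ih => exact ih.symm
      | trans _ _ _ _ _ ih1 ih2 => exact ih1.trans ih2
    intro x hx y hxy
    exact (key x y hxy).1 hx
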